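/- Let theta = q*d/dq on Q[[q]], let I = \sum_{k>=0} ((3k)!/(k!)^3)(-1)^k q^k (a unit in Q[[q]] since I(0)=1), and let X = (1+27q)^{-1}. Define S := theta(I)/I - (X-1)/3 in Q[[q]]. Then S satisfies the Riccati equation theta(S) = -S^2 + ((X-1)/3)*S - X*(X-1)/9. -/

import Mathlib

/-- The Euler derivation `θ = q d/dq` on `ℚ[[q]]`, acting on coefficients by
`(θ f)_k = k * f_k`. -/
noncomputable def theta (f : PowerSeries ℚ) : PowerSeries ℚ :=
  PowerSeries.mk fun k => (k : ℚ) * PowerSeries.coeff k f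

/-- The power series `I(q) = ∑_{k ≥ 0} ((3k)!/(k!)^3) (-1)^k q^k` (a unit since `I(0)=1`). -/
noncomputable def Iseries : PowerSeries ℚ :=
  PowerSeries.mk fun k =>
    ((Nat.factorial (3 * k) : ℚ) / (Nat.factorial k : ℚ) ^ 3) * (-1) ^ k

/-- The power series `X(q) = ∑_{k ≥ 0} (-27)^k q^k = (1+27q)^{-1}`. -/
noncomputable def Xseries : PowerSeries ℚ :=
  PowerSeries.mk fun k => (-27 : ℚ) ^ k

/-- `S := θ(I)/I - (X-1)/3`. -/
noncomputable def Sseries : PowerSeries ℚ :=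
  theta Iseries * Iseries⁻¹ - (1 / 3 : ℚ) • (Xseries - 1)

open PowerSeries

lemma theta_eq (f : PowerSeries ℚ) : theta f = X * derivativeFun f := by
  ext k
  cases k with
  | zero => simp [theta]
  | succ n => simp [theta, coeff_succ_X_mul, derivativeFun, coeff_derivative]; ring

lemma theta_mul (f g : PowerSeries ℚ) :
    theta (f * g) = theta f * g + f * theta g := by
  simp only [theta_eq, derivativeFun_mul, smul_eq_mul]; ring

lemma theta_add (f g : PowerSeries ℚ) : theta (f + g) = theta f + theta g := by
  ext k; simp [theta]; ring

lemma theta_sub (f g : PowerSeries ℚ) : theta (f - g) = theta f - theta g := by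
  ext k; simp [theta]; ring

lemma theta_smul (c : ℚ) (f : PowerSeries ℚ) : theta (c • f) = c • theta f := by
  ext k; simp [theta]; ring

lemma theta_one : theta (1 : PowerSeries ℚ) = 0 := by
  ext k; cases k <;> simp [theta, coeff_one]

lemma theta_X : theta (X : PowerSeries ℚ) = X := by
  ext k
  simp only [theta, coeff_mk, coeff_X]
  split_ifs with h <;> simp [h]

/-- `(1 + 27q) X = 1`, in the form `X + 27 q X = 1`. -/
lemma hYlemma : Xseries + (27:ℚ) • (X * Xseries) = 1 := by
  ext k
  cases k with
  | zero => simp [Xseries]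
  | succ n => simp [Xseries, coeff_succ_X_mul, coeff_one, pow_succ]; ring

/-- The Picard–Fuchs equation `θ²I + 3q(3θ+1)(3θ+2)I = 0`, expanded as
`θ²I + 27 q θ²I + 27 q θI + 6 q I = 0`. -/
lemma hPFlemma : theta (theta Iseries) + (27:ℚ) • (X * theta (theta Iseries))
    + (27:ℚ) • (X * theta Iseries) + (6:ℚ) • (X * Iseries) = 0 := by
  ext k
  cases k with
  | zero => simp [theta]
  | succ n =>
    have h3f : ((Nat.factorial (3*(n+1)) : ℚ))
        = (3*(n:ℚ)+3) * ((3*n+2) * ((3*n+1) * (Nat.factorial (3*n) : ℚ))) := by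
      rw [show 3*(n+1) = (3*n+2)+1 by ring, Nat.factorial_succ,
        show 3*n+2 = (3*n+1)+1 by ring, Nat.factorial_succ,
        show 3*n+1 = (3*n)+1 by ring, Nat.factorial_succ]
      push_cast; ring
    have hf : ((Nat.factorial (n+1) : ℚ)) = ((n:ℚ)+1) * (Nat.factorial n : ℚ) := by
      rw [Nat.factorial_succ]; push_cast; ring
    have hn0 : ((n:ℚ)+1) ≠ 0 := by positivity
    have hfn : ((Nat.factorial n : ℚ)) ≠ 0 := Nat.cast_ne_zero.2 (Nat.factorial_ne_zero n)
    simp only [theta, Iseries, map_add, map_smul, coeff_mk, coeff_succ_X_mul, map_zero,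
      coeff_zero_eq_constantCoeff, smul_eq_mul]
    rw [h3f, hf]
    push_cast
    field_simp
    ring

/-- The Riccati equation `θ(S) = -S² + ((X-1)/3) S - X(X-1)/9`. -/
theorem stmt4 :
    theta Sseries =
      -Sseries ^ 2 + ((1 / 3 : ℚ) • (Xseries - 1)) * Sseries -
        (1 / 9 : ℚ) • (Xseries * (Xseries - 1)) := by
  have huv : Iseries * Iseries⁻¹ = 1 := by
    refine PowerSeries.mul_inv_cancel _ ?_
    rw [Iseries, constantCoeff_mk]
    norm_num
  -- X-series algebraic relation (mul form)
  have hY : Xseries + 27 * (X * Xseries) = 1 := by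
    have := hYlemma
    rwa [smul_eq_C_mul, map_ofNat] at this
  -- derivative of X-series
  have hθY' : theta Xseries + 27 * (X * Xseries + X * theta Xseries) = 0 := by
    have := congrArg theta hYlemma
    rw [theta_add, theta_smul, theta_mul, theta_X, theta_one] at this
    rwa [smul_eq_C_mul, map_ofNat] at this
  have hθY2 : theta Xseries = Xseries * Xseries - Xseries := by
    linear_combination Xseries * hθY' - (theta Xseries + Xseries) * hY
  -- derivative of inverse
  have hθv' : theta Iseries * Iseries⁻¹ + Iseries * theta (Iseries⁻¹) = 0 := by
    have := congrArg theta huv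
    rwa [theta_mul, theta_one] at this
  have hθv2 : theta (Iseries⁻¹) = -(Iseries⁻¹ * Iseries⁻¹ * theta Iseries) := by
    linear_combination Iseries⁻¹ * hθv' - theta (Iseries⁻¹) * huv
  -- Picard-Fuchs (mul form)
  have hPF : theta (theta Iseries) + 27 * (X * theta (theta Iseries))
      + 27 * (X * theta Iseries) + 6 * (X * Iseries) = 0 := by
    have := hPFlemma
    rwa [smul_eq_C_mul, map_ofNat, smul_eq_C_mul, map_ofNat, smul_eq_C_mul, map_ofNat] at this
  have hd9 : (9 : PowerSeries ℚ) * (theta (theta Iseries) * Iseries⁻¹)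
      = 9 * ((Xseries - 1) * (theta Iseries * Iseries⁻¹)) + 2 * (Xseries - 1) := by
    linear_combination (9 * Iseries⁻¹ * Xseries) * hPF
      - (9 * Iseries⁻¹ * theta (theta Iseries) + 9 * Iseries⁻¹ * theta Iseries
        + 2 * Iseries * Iseries⁻¹) * hY
      + 2 * (Xseries - 1) * huv
  have h3 : (3 : PowerSeries ℚ) * C (1/3 : ℚ) = 1 := by
    rw [← map_ofNat (C) 3, ← map_mul]; norm_num
  have h19 : C (1/9 : ℚ) = C (1/3 : ℚ) * C (1/3 : ℚ) := by
    rw [← map_mul]; norm_num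
  have expand : theta Sseries = theta (theta Iseries) * Iseries⁻¹
      + theta Iseries * theta (Iseries⁻¹) - (1/3 : ℚ) • theta Xseries := by
    rw [Sseries, theta_sub, theta_mul, theta_smul, theta_sub, theta_one, sub_zero]
  rw [expand, Sseries, hθv2, hθY2]
  simp only [smul_eq_C_mul]
  rw [h19]
  linear_combination (C (1/3 : ℚ) * C (1/3 : ℚ)) * hd9
    + (3 * C (1/3 : ℚ) * (Xseries - 1) * (theta Iseries * Iseries⁻¹)
      + C (1/3 : ℚ) * Xseries * (Xseries - 1)
      - (1 + 3 * C (1/3 : ℚ)) * (theta (theta Iseries) * Iseries⁻¹)) * h3
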